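/- Let u : ℝ³ → ℝ be defined by u(x, y, t) = (x² + y²)eᵗ + (1/4)e^{−t} − eᵗ. Then at every point p ∈ ℝ³, the eigenvalues λ₁(p), λ₂(p), λ₃(p) of the (symmetric) Hessian matrix D²u(p) satisfy arctan λ₁(p) + arctan λ₂(p) + arctan λ₃(p) = π/2; that is, u is an entire solution of the special Lagrangian equation with critical phase θ = π/2 on ℝ³. -/

import Mathlib

/-- The `k`-th elementary symmetric function of a square real matrix:
the sum of its `k × k` principal minors. -/
noncomputable def sigmaK {ι : Type*} [Fintype ι] [DecidableEq ι] (k : ℕ)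
    (A : Matrix ι ι ℝ) : ℝ :=
  ∑ s ∈ (Finset.univ : Finset ι).powersetCard k,
    Matrix.det (fun i j : {x : ι // x ∈ s} => A i.1 j.1)

/-- The Hessian matrix of `u` at `x`, with entries `∂ᵢ∂ⱼ u (x)`. -/
noncomputable def hessian {ι : Type*} [Fintype ι] [DecidableEq ι]
    (u : (ι → ℝ) → ℝ) (x : ι → ℝ) : Matrix ι ι ℝ :=
  fun i j => fderiv ℝ (fun y => fderiv ℝ u y (Pi.single j 1)) x (Pi.single i 1)

noncomputable def pr (i : Fin 3) : (Fin 3 → ℝ) →L[ℝ] ℝ := ContinuousLinearMap.proj i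

lemma hasFDerivAt_U (y : Fin 3 → ℝ) :
    HasFDerivAt (fun v : Fin 3 → ℝ => (v 0 ^ 2 + v 1 ^ 2) * Real.exp (v 2)
      + (1 / 4) * Real.exp (-(v 2)) - Real.exp (v 2))
    ((2*(y 0)*Real.exp (y 2)) • pr 0 + (2*(y 1)*Real.exp (y 2)) • pr 1
      + (((y 0)^2+(y 1)^2)*Real.exp (y 2) - (1/4)*Real.exp (-(y 2)) - Real.exp (y 2)) • pr 2) y := by
  have h0 : HasFDerivAt (fun v : Fin 3 → ℝ => v 0) (pr 0) y := (pr 0).hasFDerivAt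
  have h1 : HasFDerivAt (fun v : Fin 3 → ℝ => v 1) (pr 1) y := (pr 1).hasFDerivAt
  have h2 : HasFDerivAt (fun v : Fin 3 → ℝ => v 2) (pr 2) y := (pr 2).hasFDerivAt
  have e2 := h2.exp
  have e2' := (h2.neg).exp
  simp only [pow_two]
  have hsq := (h0.mul h0).add (h1.mul h1)
  have hc : HasFDerivAt (fun _ : Fin 3 → ℝ => (1:ℝ)/4) (0 : (Fin 3 → ℝ) →L[ℝ] ℝ) y :=
    hasFDerivAt_const _ _
  have := ((hsq.mul e2).add (hc.mul e2')).sub e2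
  refine this.congr_fderiv ?_
  ext v
  simp [pr]
  ring

lemma grad_U (y : Fin 3 → ℝ) (j : Fin 3) :
    fderiv ℝ (fun v : Fin 3 → ℝ => (v 0 ^ 2 + v 1 ^ 2) * Real.exp (v 2)
      + (1 / 4) * Real.exp (-(v 2)) - Real.exp (v 2)) y (Pi.single j 1)
    = if j = 0 then 2*(y 0)*Real.exp (y 2) else if j = 1 then 2*(y 1)*Real.exp (y 2)
      else ((y 0)^2+(y 1)^2)*Real.exp (y 2) - (1/4)*Real.exp (-(y 2)) - Real.exp (y 2) := by
  rw [(hasFDerivAt_U y).fderiv]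
  fin_cases j <;> simp [pr, Pi.single_apply]

lemma hasFDerivAt_g0 (y : Fin 3 → ℝ) :
    HasFDerivAt (fun v : Fin 3 → ℝ => 2*(v 0)*Real.exp (v 2))
    ((2*Real.exp (y 2)) • pr 0 + (2*(y 0)*Real.exp (y 2)) • pr 2) y := by
  have h0 : HasFDerivAt (fun v : Fin 3 → ℝ => v 0) (pr 0) y := (pr 0).hasFDerivAt
  have h2 : HasFDerivAt (fun v : Fin 3 → ℝ => v 2) (pr 2) y := (pr 2).hasFDerivAt
  have := ((h0.const_mul (2:ℝ)).mul h2.exp)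
  refine this.congr_fderiv ?_
  ext v
  simp [pr]
  ring

lemma hasFDerivAt_g1 (y : Fin 3 → ℝ) :
    HasFDerivAt (fun v : Fin 3 → ℝ => 2*(v 1)*Real.exp (v 2))
    ((2*Real.exp (y 2)) • pr 1 + (2*(y 1)*Real.exp (y 2)) • pr 2) y := by
  have h1 : HasFDerivAt (fun v : Fin 3 → ℝ => v 1) (pr 1) y := (pr 1).hasFDerivAt
  have h2 : HasFDerivAt (fun v : Fin 3 → ℝ => v 2) (pr 2) y := (pr 2).hasFDerivAt
  have := ((h1.const_mul (2:ℝ)).mul h2.exp)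
  refine this.congr_fderiv ?_
  ext v
  simp [pr]
  ring

lemma hasFDerivAt_g2 (y : Fin 3 → ℝ) :
    HasFDerivAt (fun v : Fin 3 → ℝ => ((v 0)^2+(v 1)^2)*Real.exp (v 2)
        - (1/4)*Real.exp (-(v 2)) - Real.exp (v 2))
    ((2*(y 0)*Real.exp (y 2)) • pr 0 + (2*(y 1)*Real.exp (y 2)) • pr 1
      + (((y 0)^2+(y 1)^2)*Real.exp (y 2) + (1/4)*Real.exp (-(y 2)) - Real.exp (y 2)) • pr 2) y := by
  have h0 : HasFDerivAt (fun v : Fin 3 → ℝ => v 0) (pr 0) y := (pr 0).hasFDerivAt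
  have h1 : HasFDerivAt (fun v : Fin 3 → ℝ => v 1) (pr 1) y := (pr 1).hasFDerivAt
  have h2 : HasFDerivAt (fun v : Fin 3 → ℝ => v 2) (pr 2) y := (pr 2).hasFDerivAt
  have e2 := h2.exp
  have e2' := (h2.neg).exp
  simp only [pow_two]
  have hsq := (h0.mul h0).add (h1.mul h1)
  have hc : HasFDerivAt (fun _ : Fin 3 → ℝ => (1:ℝ)/4) (0 : (Fin 3 → ℝ) →L[ℝ] ℝ) y :=
    hasFDerivAt_const _ _
  have := ((hsq.mul e2).sub (hc.mul e2')).sub e2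
  refine this.congr_fderiv ?_
  ext v
  simp [pr]
  ring

lemma hessian_eq (p : Fin 3 → ℝ) :
    hessian (fun v : Fin 3 → ℝ => (v 0 ^ 2 + v 1 ^ 2) * Real.exp (v 2)
      + (1 / 4) * Real.exp (-(v 2)) - Real.exp (v 2)) p
    = Matrix.of ![![2*Real.exp (p 2), 0, 2*(p 0)*Real.exp (p 2)],
        ![0, 2*Real.exp (p 2), 2*(p 1)*Real.exp (p 2)],
        ![2*(p 0)*Real.exp (p 2), 2*(p 1)*Real.exp (p 2),
          ((p 0)^2+(p 1)^2)*Real.exp (p 2) + (1/4)*Real.exp (-(p 2)) - Real.exp (p 2)]] := by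
  have hg : ∀ j : Fin 3, (fun y : Fin 3 → ℝ => fderiv ℝ (fun v : Fin 3 → ℝ =>
      (v 0 ^ 2 + v 1 ^ 2) * Real.exp (v 2) + (1 / 4) * Real.exp (-(v 2)) - Real.exp (v 2)) y
      (Pi.single j 1))
      = if j = 0 then (fun y => 2*(y 0)*Real.exp (y 2))
        else if j = 1 then (fun y => 2*(y 1)*Real.exp (y 2))
        else (fun y => ((y 0)^2+(y 1)^2)*Real.exp (y 2) - (1/4)*Real.exp (-(y 2)) - Real.exp (y 2)) := by
    intro j
    funext y
    rw [grad_U]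
    fin_cases j <;> simp
  ext i j
  show fderiv ℝ _ p (Pi.single i 1) = _
  rw [hg j]
  fin_cases j
  · rw [show (⟨0, by omega⟩ : Fin 3) = 0 from rfl, if_pos rfl, (hasFDerivAt_g0 p).fderiv]
    fin_cases i <;> simp [pr, Pi.single_apply]
  · rw [show (⟨1, by omega⟩ : Fin 3) = 1 from rfl, if_neg (by decide), if_pos rfl,
      (hasFDerivAt_g1 p).fderiv]
    fin_cases i <;> simp [pr, Pi.single_apply]
  · rw [show (⟨2, by omega⟩ : Fin 3) = 2 from rfl, if_neg (by decide), if_neg (by decide),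
      (hasFDerivAt_g2 p).fderiv]
    fin_cases i <;> simp [pr, Pi.single_apply]

open Polynomial Matrix


lemma charmatrix_conj {n : Type*} [Fintype n] [DecidableEq n] (A V W : Matrix n n ℝ)
    (h1 : V * W = 1) :
    charmatrix (V * A * W) = (C : ℝ →+* ℝ[X]).mapMatrix V * charmatrix A
      * (C : ℝ →+* ℝ[X]).mapMatrix W := by
  have hmap : ∀ (M N : Matrix n n ℝ), (C : ℝ →+* ℝ[X]).mapMatrix (M * N)
      = (C : ℝ →+* ℝ[X]).mapMatrix M * (C : ℝ →+* ℝ[X]).mapMatrix N := fun M N => by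
    simp [RingHom.mapMatrix_apply, Matrix.map_mul]
  have hone : (C : ℝ →+* ℝ[X]).mapMatrix V * (C : ℝ →+* ℝ[X]).mapMatrix W = 1 := by
    rw [← hmap, h1]; simp [RingHom.mapMatrix_apply]
  rw [charmatrix, charmatrix, mul_sub, sub_mul]
  congr 1
  · symm
    calc (C : ℝ →+* ℝ[X]).mapMatrix V * (scalar n) X * (C : ℝ →+* ℝ[X]).mapMatrix W
        = (scalar n) X * ((C : ℝ →+* ℝ[X]).mapMatrix V * (C : ℝ →+* ℝ[X]).mapMatrix W) := by
          rw [← (scalar_commute (X : ℝ[X]) (fun r' => Commute.all _ _)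
            ((C : ℝ →+* ℝ[X]).mapMatrix V)).eq, mul_assoc]
      _ = (scalar n) X := by rw [hone, mul_one]
  · rw [hmap, hmap]

lemma charpoly_isHermitian_eq {n : Type*} [Fintype n] [DecidableEq n] {A : Matrix n n ℝ}
    (hA : A.IsHermitian) :
    A.charpoly = ∏ i, (X - C (hA.eigenvalues i)) := by
  have hspec := hA.spectral_theorem
  set V : Matrix n n ℝ := (hA.eigenvectorUnitary : Matrix n n ℝ) with hVdef
  have hunit : V * star V = 1 := Matrix.mem_unitaryGroup_iff.mp hA.eigenvectorUnitary.2
  have hdiag : (RCLike.ofReal ∘ hA.eigenvalues : n → ℝ) = hA.eigenvalues := by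
    funext i; simp
  rw [Matrix.charpoly]
  conv_lhs => rw [hspec]
  rw [Unitary.conjStarAlgAut_apply]
  rw [charmatrix_conj _ _ _ hunit, det_mul, det_mul]
  rw [mul_comm, ← mul_assoc]
  have hdetone : ((C : ℝ →+* ℝ[X]).mapMatrix (star V)).det
      * ((C : ℝ →+* ℝ[X]).mapMatrix V).det = 1 := by
    rw [← det_mul, ← RingHom.map_mul, (Matrix.mem_unitaryGroup_iff'.mp hA.eigenvectorUnitary.2)]
    simp
  rw [hdetone, one_mul, hdiag]
  have : charmatrix (diagonal hA.eigenvalues) = diagonal (fun i => X - C (hA.eigenvalues i)) := by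
    ext i j
    by_cases h : i = j
    · subst h; simp
    · simp [h, charmatrix_apply_ne _ _ _ h, diagonal_apply_ne _ h]
  rw [this, det_diagonal]


set_option maxHeartbeats 1000000 in
open Polynomial Matrix in
/-- The function `u(x, y, t) = (x² + y²)eᵗ + (1/4)e^{−t} − eᵗ` solves the special
Lagrangian equation with critical phase `θ = π/2` on `ℝ³`: at every point the arctangents
of the eigenvalues of its (symmetric) Hessian sum to `π/2`. -/
theorem explicit_solution_special_lagrangian (u : (Fin 3 → ℝ) → ℝ)
    (hu : u = fun v => (v 0 ^ 2 + v 1 ^ 2) * Real.exp (v 2)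
      + (1 / 4) * Real.exp (-(v 2)) - Real.exp (v 2)) :
    ∀ p : Fin 3 → ℝ, ∃ hsymm : (hessian u p).IsHermitian,
      ∑ i, Real.arctan (hsymm.eigenvalues i) = Real.pi / 2 := by
  subst hu
  intro p
  rw [hessian_eq p]
  set a := p 0 with ha
  set b := p 1 with hb
  set E := Real.exp (p 2) with hE
  set F := Real.exp (-(p 2)) with hF
  have hEpos : 0 < E := Real.exp_pos _
  have hEF : E * F = 1 := by rw [hE, hF, ← Real.exp_add]; simp
  set c : ℝ := (a^2+b^2)*E + (1/4)*F - E with hc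
  set M : Matrix (Fin 3) (Fin 3) ℝ := Matrix.of ![![2*E, 0, 2*a*E],
        ![0, 2*E, 2*b*E], ![2*a*E, 2*b*E, c]] with hM
  have hsymm : M.IsHermitian := by
    show Mᴴ = M
    ext i j
    fin_cases i <;> fin_cases j <;> simp [hM, Matrix.conjTranspose_apply]
  refine ⟨hsymm, ?_⟩
  set f := hsymm.eigenvalues with hf
  -- the three explicit roots
  set q : ℝ := Real.sqrt ((2*E - c)^2 + 4*((2*a*E)^2+(2*b*E)^2)) with hqdef
  have hq2 : q^2 = (2*E - c)^2 + 4*((2*a*E)^2+(2*b*E)^2) :=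
    Real.sq_sqrt (by positivity)
  have hqnn : 0 ≤ q := Real.sqrt_nonneg _
  set α : ℝ := 2*E with hα
  set β : ℝ := (2*E + c + q)/2 with hβ
  set γ : ℝ := (2*E + c - q)/2 with hγ
  have hcp : M.charpoly = (X - C α)*(X - C β)*(X - C γ) := by
    apply Polynomial.funext
    intro x
    rw [Matrix.charpoly, ← Polynomial.coe_evalRingHom, RingHom.map_det, Matrix.det_fin_three]
    simp only [Matrix.map_apply, Polynomial.coe_evalRingHom, charmatrix_apply,
      Matrix.scalar_apply, RingHom.mapMatrix_apply, Matrix.sub_apply, Matrix.diagonal_apply,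
      Polynomial.eval_sub, Polynomial.eval_mul, Polynomial.eval_add, Polynomial.eval_X,
      Polynomial.eval_C, Polynomial.eval_zero,
      show ((0:Fin 3) = 2) = False from by decide, show ((2:Fin 3) = 0) = False from by decide,
      show ((1:Fin 3) = 2) = False from by decide, show ((2:Fin 3) = 1) = False from by decide,
      show ((0:Fin 3) = 1) = False from by decide, show ((1:Fin 3) = 0) = False from by decide,
      if_false, if_true, eq_self_iff_true]
    norm_num [hM, Matrix.cons_val_two, Matrix.vecHead, Matrix.vecTail]
    linear_combination ((x - 2*E)/4) * hq2
  have hprod : ∏ i, (X - C (f i)) = (X - C α)*(X - C β)*(X - C γ) := by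
    rw [← charpoly_isHermitian_eq hsymm, hcp]
  have hms : (Finset.univ.val.map f) = ({α, β, γ} : Multiset ℝ) := by
    have e1 : ((Finset.univ.val.map f).map (fun r : ℝ => X - C r)).prod
        = (({α, β, γ} : Multiset ℝ).map (fun r : ℝ => X - C r)).prod := by
      rw [Multiset.map_map]
      rw [show (({α, β, γ} : Multiset ℝ).map (fun r : ℝ => X - C r)).prod
        = (X - C α)*(X - C β)*(X - C γ) by
          simp [Multiset.insert_eq_cons, mul_assoc]]
      exact hprod
    have e2 := congrArg Polynomial.roots e1
    rwa [Polynomial.roots_multiset_prod_X_sub_C, Polynomial.roots_multiset_prod_X_sub_C] at e2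
  have hsum : ∑ i, Real.arctan (f i) = Real.arctan α + Real.arctan β + Real.arctan γ := by
    rw [Finset.sum_eq_multiset_sum]
    rw [show (Finset.univ.val.map (fun i => Real.arctan (f i)))
      = ((Finset.univ.val.map f).map Real.arctan) by rw [Multiset.map_map]; rfl]
    rw [hms]
    simp [Multiset.insert_eq_cons, add_assoc]
  rw [hsum]
  -- now the arctan arithmetic
  have hβγ : β * γ = 2*E*c - ((2*a*E)^2+(2*b*E)^2) := by
    rw [hβ, hγ]
    field_simp
    linear_combination -hq2
  have hβγlt : β * γ < 1 := by
    rw [hβγ, hc]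
    nlinarith [sq_nonneg a, sq_nonneg b, sq_nonneg (a*E), sq_nonneg (b*E), hEpos, hEF]
  have hsumβγ : β + γ = 2*E + c := by rw [hβ, hγ]; ring
  have hposc : 0 < 2*E + c := by
    rw [hc]
    nlinarith [sq_nonneg a, sq_nonneg b, hEpos, hEF, Real.exp_pos (-(p 2))]
  have hpos1 : 0 < 1 - β*γ := by
    rw [hβγ, hc]
    nlinarith [sq_nonneg (a*E), sq_nonneg (b*E), hEpos, hEF]
  have harg : (β + γ)/(1 - β*γ) = (2*E)⁻¹ := by
    rw [hsumβγ, div_eq_iff hpos1.ne', eq_comm, inv_mul_eq_div, div_eq_iff (by positivity : (2*E) ≠ 0), hβγ, hc]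
    linear_combination (-(1:ℝ)) * hEF
  rw [add_assoc, Real.arctan_add hβγlt, harg, Real.arctan_inv_of_pos (by positivity : (0:ℝ) < 2*E), hα]
  ring
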